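/- Let m ≤ n be non-negative integers, let (C, ⊗, 1) be an additive symmetric monoidal category with finite biproducts, let l be a positive divisor of n, let i be an integer coprime to l, and let b be an object of C with b^{⊗l} ≅ 1. Then there is an isomorphism (n choose m)_{b^{⊗i}} ≅ (n choose m)_b in C, i.e. the evaluation of the Gaussian polynomial (n choose m)_t at the object b^{⊗i} is isomorphic to its evaluation at b. -/

import Mathlib

open CategoryTheory CategoryTheory.Limits CategoryTheory.MonoidalCategory Polynomial Finset

universe v u

variable {C : Type u} [Category.{v} C] [MonoidalCategory C] [Preadditive C]
  [HasFiniteBiproducts C]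

/-- The `j`-fold tensor power `b^{⊗j}` of an object `b`. -/
def tensorPow (b : C) : ℕ → C
  | 0 => 𝟙_ C
  | j + 1 => tensorPow b j ⊗ b

/-- The evaluation `p(b) = 𝟙^{⊕a₀} ⊕ b^{⊕a₁} ⊕ (b^{⊗2})^{⊕a₂} ⊕ ⋯` of a polynomial
`p = a₀ + a₁ t + ⋯ + aₙ tⁿ` with natural number coefficients at an object `b`. -/
noncomputable def evalPoly (p : Polynomial ℕ) (b : C) : C :=
  ⨁ fun i : Fin (p.natDegree + 1) => ⨁ fun _ : Fin (p.coeff i.1) => tensorPow b i.1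

lemma one_sub_X_pow_factor (d e : ℕ) :
    (1 : Polynomial ℂ) - X ^ e =
      (-1) * ((if d ∣ e then (X ^ d - 1 : Polynomial ℂ) else 1) *
        (if d ∣ e then ∑ t ∈ range (e / d), (X : Polynomial ℂ) ^ (d * t) else X ^ e - 1)) := by
  by_cases h : d ∣ e
  · simp only [if_pos h]
    have h1 := geom_sum_mul ((X : Polynomial ℂ) ^ d) (e / d)
    simp only [← pow_mul] at h1
    rw [Nat.mul_div_cancel' h] at h1
    rw [show ((-1 : Polynomial ℂ)) * ((X ^ d - 1) * (∑ t ∈ range (e / d), (X : Polynomial ℂ) ^ (d * t)))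
        = -((∑ t ∈ range (e / d), (X : Polynomial ℂ) ^ (d * t)) * (X ^ d - 1)) by ring, h1]
    ring
  · simp only [if_neg h]; ring

lemma prod_one_sub_factor (d m : ℕ) (E : ℕ → ℕ) :
    ∏ j ∈ range m, ((1 : Polynomial ℂ) - X ^ (E j)) =
      (-1) ^ m * (X ^ d - 1) ^ #{j ∈ range m | d ∣ E j} *
        ∏ j ∈ range m, (if d ∣ E j then ∑ t ∈ range (E j / d), (X : Polynomial ℂ) ^ (d * t)
          else X ^ (E j) - 1) := by
  rw [Finset.prod_congr rfl fun j _ => one_sub_X_pow_factor d (E j)]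
  rw [Finset.prod_mul_distrib, Finset.prod_mul_distrib, Finset.prod_const, Finset.card_range]
  have h2 : (∏ x ∈ range m, if d ∣ E x then (X ^ d - 1 : Polynomial ℂ) else 1)
      = (X ^ d - 1) ^ #{j ∈ range m | d ∣ E j} := by
    rw [← Finset.prod_filter, Finset.prod_const]
  rw [h2, mul_assoc]

lemma count_dvd (d m : ℕ) : #{j ∈ range m | d ∣ j} = m / d + if d ∣ m then 0 else 1 := by
  induction m with
  | zero => simp
  | succ m ih =>
    rw [Nat.succ_div]
    by_cases h : d ∣ m <;> by_cases h2 : d ∣ (m + 1) <;>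
      simp [Finset.range_add_one, Finset.filter_insert, h, h2,
        Finset.card_insert_of_notMem (fun hc => Finset.notMem_range_self (Finset.mem_of_mem_filter m hc)), ih] <;>
      omega

lemma eval_key (n m d : ℕ) (hmn : m ≤ n) (hd : 0 < d) (hdn : d ∣ n)
    (g : Polynomial ℕ)
    (hg : g.map (Nat.castRingHom ℤ) * ∏ j ∈ Finset.range m, ((1 : Polynomial ℤ) - X ^ (j + 1))
        = ∏ j ∈ Finset.range m, ((1 : Polynomial ℤ) - X ^ (n - j)))
    (ξ : ℂ) (hξ : IsPrimitiveRoot ξ d) :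
    ((g.map (Nat.castRingHom ℤ)).map (Int.castRingHom ℂ)).eval ξ *
        ((∏ j ∈ {j ∈ range m | d ∣ (j + 1)}, ((j + 1) / d) : ℕ) : ℂ) =
      if d ∣ m then ((∏ j ∈ {j ∈ range m | d ∣ (n - j)}, ((n - j) / d) : ℕ) : ℂ) else 0 := by
  classical
  set gC := (g.map (Nat.castRingHom ℤ)).map (Int.castRingHom ℂ) with hgCdef
  have hgC := congrArg (Polynomial.map (Int.castRingHom ℂ)) hg
  simp only [Polynomial.map_mul, Polynomial.map_prod, Polynomial.map_sub, Polynomial.map_pow,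
    Polynomial.map_one, Polynomial.map_X] at hgC
  rw [prod_one_sub_factor d m (fun j => j + 1), prod_one_sub_factor d m (fun j => n - j)] at hgC
  -- identify the filters and counts
  have hBA : {j ∈ range m | d ∣ (n - j)} = {j ∈ range m | d ∣ j} := by
    ext j
    simp only [Finset.mem_filter, Finset.mem_range]
    constructor
    · rintro ⟨hj, hdvd⟩
      refine ⟨hj, ?_⟩
      have : n - (n - j) = j := Nat.sub_sub_self (le_trans (le_of_lt hj) hmn)
      simpa [this] using Nat.dvd_sub hdn hdvd
    · rintro ⟨hj, hdvd⟩
      exact ⟨hj, Nat.dvd_sub hdn hdvd⟩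
  have cqA : #{j ∈ range m | d ∣ (j + 1)} = m / d := Nat.card_multiples m d
  have cqB : #{j ∈ range m | d ∣ (n - j)} = m / d + if d ∣ m then 0 else 1 := by
    rw [hBA, count_dvd]
  rw [cqA, cqB] at hgC
  set UA := ∏ j ∈ range m, (if d ∣ (j + 1) then ∑ t ∈ range ((j + 1) / d), (X : Polynomial ℂ) ^ (d * t)
      else X ^ (j + 1) - 1) with hUA
  set UB := ∏ j ∈ range m, (if d ∣ (n - j) then ∑ t ∈ range ((n - j) / d), (X : Polynomial ℂ) ^ (d * t)
      else X ^ (n - j) - 1) with hUB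
  have hXd : (X ^ d - 1 : Polynomial ℂ) ≠ 0 := by
    intro h
    have := congrArg (Polynomial.eval 0) h
    simp [zero_pow hd.ne'] at this
  -- cancel the signs and the common power
  have hneg : ((-1 : Polynomial ℂ)) ^ m ≠ 0 := pow_ne_zero _ (neg_ne_zero.mpr one_ne_zero)
  have hpow : ((X ^ d - 1 : Polynomial ℂ)) ^ (m / d) ≠ 0 := pow_ne_zero _ hXd
  have hE : gC * UA * (-1 : Polynomial ℂ) ^ m * (X ^ d - 1) ^ (m / d)
      = ((X ^ d - 1) ^ (if d ∣ m then 0 else 1) * UB) * (-1 : Polynomial ℂ) ^ m * (X ^ d - 1) ^ (m / d) := by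
    rw [pow_add] at hgC
    linear_combination hgC
  have hE2 : gC * UA = (X ^ d - 1) ^ (if d ∣ m then 0 else 1) * UB :=
    mul_right_cancel₀ hneg (mul_right_cancel₀ hpow hE)
  -- evaluate at ξ
  have evalU : ∀ e : ℕ,
      Polynomial.eval ξ (if d ∣ e then ∑ t ∈ range (e / d), (X : Polynomial ℂ) ^ (d * t)
          else X ^ e - 1)
        = if d ∣ e then ((e / d : ℕ) : ℂ) else ξ ^ e - 1 := by
    intro e
    split
    · rw [Polynomial.eval_finset_sum]
      have hone : ∀ t ∈ range (e / d), Polynomial.eval ξ ((X : Polynomial ℂ) ^ (d * t)) = 1 := by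
        intro t _
        rw [Polynomial.eval_pow, Polynomial.eval_X, pow_mul, hξ.pow_eq_one, one_pow]
      rw [Finset.sum_congr rfl hone, Finset.sum_const, Finset.card_range, nsmul_eq_mul, mul_one]
    · simp
  have hUAeval : Polynomial.eval ξ UA
      = ((∏ j ∈ {j ∈ range m | d ∣ (j + 1)}, ((j + 1) / d) : ℕ) : ℂ)
        * ∏ j ∈ {j ∈ range m | ¬ d ∣ (j + 1)}, (ξ ^ (j + 1) - 1) := by
    rw [hUA, Polynomial.eval_prod]
    rw [Finset.prod_congr rfl fun j _ => evalU (j + 1)]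
    rw [← Finset.prod_filter_mul_prod_filter_not (range m) (fun j => d ∣ (j + 1)), Nat.cast_prod]
    congr 1
    · exact Finset.prod_congr rfl fun j hj => by rw [if_pos (Finset.mem_filter.mp hj).2]
    · exact Finset.prod_congr rfl fun j hj => by rw [if_neg (Finset.mem_filter.mp hj).2]
  have hUBeval : Polynomial.eval ξ UB
      = ((∏ j ∈ {j ∈ range m | d ∣ (n - j)}, ((n - j) / d) : ℕ) : ℂ)
        * ∏ j ∈ {j ∈ range m | ¬ d ∣ (n - j)}, (ξ ^ (n - j) - 1) := by
    rw [hUB, Polynomial.eval_prod]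
    rw [Finset.prod_congr rfl fun j _ => evalU (n - j)]
    rw [← Finset.prod_filter_mul_prod_filter_not (range m) (fun j => d ∣ (n - j)), Nat.cast_prod]
    congr 1
    · exact Finset.prod_congr rfl fun j hj => by rw [if_pos (Finset.mem_filter.mp hj).2]
    · exact Finset.prod_congr rfl fun j hj => by rw [if_neg (Finset.mem_filter.mp hj).2]
  have hWA_ne : (∏ j ∈ {j ∈ range m | ¬ d ∣ (j + 1)}, (ξ ^ (j + 1) - 1)) ≠ 0 := by
    rw [Finset.prod_ne_zero_iff]
    intro j hj h0
    exact (Finset.mem_filter.mp hj).2 ((hξ.pow_eq_one_iff_dvd (j + 1)).mp (by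
      have := sub_eq_zero.mp h0; simpa using this))
  have hEv := congrArg (Polynomial.eval ξ) hE2
  rw [Polynomial.eval_mul, Polynomial.eval_mul, Polynomial.eval_pow, Polynomial.eval_sub,
    Polynomial.eval_pow, Polynomial.eval_one, Polynomial.eval_X, hξ.pow_eq_one, sub_self,
    hUAeval, hUBeval] at hEv
  by_cases hdm : d ∣ m
  · rw [if_pos hdm] at hEv ⊢
    rw [pow_zero, one_mul] at hEv
    have hW : (∏ j ∈ {j ∈ range m | ¬ d ∣ (n - j)}, (ξ ^ (n - j) - 1))
        = ∏ j ∈ {j ∈ range m | ¬ d ∣ (j + 1)}, (ξ ^ (j + 1) - 1) := by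
      have hdnm : d ∣ n - m := Nat.dvd_sub hdn hdm
      refine Finset.prod_nbij' (fun j => m - 1 - j) (fun j => m - 1 - j) ?_ ?_ ?_ ?_ ?_ <;>
        simp only [Finset.mem_filter, Finset.mem_range]
      · rintro j ⟨hjm, hnd⟩
        refine ⟨by omega, fun hmj => hnd ?_⟩
        rw [show m - 1 - j + 1 = m - j from by omega] at hmj
        rw [show n - j = (n - m) + (m - j) from by omega]
        exact Nat.dvd_add hdnm hmj
      · rintro j ⟨hjm, hnd⟩
        refine ⟨by omega, fun hmj => hnd ?_⟩
        rw [show n - (m - 1 - j) = (n - m) + (j + 1) from by omega] at hmj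
        simpa using Nat.dvd_sub hmj hdnm
      · rintro j ⟨hjm, _⟩; omega
      · rintro j ⟨hjm, _⟩; omega
      · rintro j ⟨hjm, _⟩
        rw [show m - 1 - j + 1 = m - j from by omega,
          show n - j = (n - m) + (m - j) from by omega, pow_add,
          (hξ.pow_eq_one_iff_dvd (n - m)).mpr hdnm, one_mul]
    rw [hW] at hEv
    rw [show Polynomial.eval ξ gC * (((∏ j ∈ {j ∈ range m | d ∣ (j + 1)}, ((j + 1) / d) : ℕ) : ℂ)
        * ∏ j ∈ {j ∈ range m | ¬ d ∣ (j + 1)}, (ξ ^ (j + 1) - 1))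
      = (Polynomial.eval ξ gC * ((∏ j ∈ {j ∈ range m | d ∣ (j + 1)}, ((j + 1) / d) : ℕ) : ℂ))
        * ∏ j ∈ {j ∈ range m | ¬ d ∣ (j + 1)}, (ξ ^ (j + 1) - 1) from by ring] at hEv
    exact mul_right_cancel₀ hWA_ne hEv
  · rw [if_neg hdm] at hEv ⊢
    rw [pow_one, zero_mul] at hEv
    have : (Polynomial.eval ξ gC * ((∏ j ∈ {j ∈ range m | d ∣ (j + 1)}, ((j + 1) / d) : ℕ) : ℂ))
        * ∏ j ∈ {j ∈ range m | ¬ d ∣ (j + 1)}, (ξ ^ (j + 1) - 1) = 0 := by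
      rw [mul_assoc]; exact hEv
    exact (mul_eq_zero.mp this).resolve_right hWA_ne

lemma gauss_dvd (n m l i : ℕ) (hmn : m ≤ n) (hl : 0 < l) (hln : l ∣ n) (hi : Nat.Coprime i l)
    (g : Polynomial ℕ)
    (hg : g.map (Nat.castRingHom ℤ) * ∏ j ∈ Finset.range m, ((1 : Polynomial ℤ) - X ^ (j + 1))
        = ∏ j ∈ Finset.range m, ((1 : Polynomial ℤ) - X ^ (n - j))) :
    (X ^ l - 1 : Polynomial ℚ) ∣
      (g.map (Nat.castRingHom ℚ)) - (g.map (Nat.castRingHom ℚ)).comp (X ^ i) := by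
  rw [← prod_cyclotomic_eq_X_pow_sub_one hl ℚ]
  apply Finset.prod_dvd_of_coprime
  · intro d1 h1 d2 h2 hne
    exact Polynomial.cyclotomic.isCoprime_rat hne
  · intro d hdmem
    have hdl : d ∣ l := Nat.dvd_of_mem_divisors hdmem
    have hdpos : 0 < d := Nat.pos_of_mem_divisors hdmem
    have hdn : d ∣ n := hdl.trans hln
    have hid : Nat.Coprime i d := Nat.Coprime.coprime_dvd_right hdl hi
    have hζ : IsPrimitiveRoot (Complex.exp (2 * Real.pi * Complex.I / d)) d :=
      Complex.isPrimitiveRoot_exp d hdpos.ne'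
    set ζ : ℂ := Complex.exp (2 * Real.pi * Complex.I / d) with hζdef
    have hζi : IsPrimitiveRoot (ζ ^ i) d := hζ.pow_of_coprime i hid
    have bridge : ∀ z : ℂ, Polynomial.aeval z (g.map (Nat.castRingHom ℚ))
        = ((g.map (Nat.castRingHom ℤ)).map (Int.castRingHom ℂ)).eval z := by
      intro z
      rw [Polynomial.aeval_def, Polynomial.eval₂_eq_eval_map, Polynomial.map_map,
        Polynomial.map_map]
      congr 2
    have hcA : ((∏ j ∈ {j ∈ range m | d ∣ (j + 1)}, ((j + 1) / d) : ℕ) : ℂ) ≠ 0 := by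
      rw [Nat.cast_ne_zero]
      rw [Finset.prod_ne_zero_iff]
      intro j hj
      exact (Nat.div_pos (Nat.le_of_dvd (Nat.succ_pos j) (Finset.mem_filter.mp hj).2) hdpos).ne'
    have heq : ((g.map (Nat.castRingHom ℤ)).map (Int.castRingHom ℂ)).eval ζ
        = ((g.map (Nat.castRingHom ℤ)).map (Int.castRingHom ℂ)).eval (ζ ^ i) := by
      have e1 := eval_key n m d hmn hdpos hdn g hg ζ hζ
      have e2 := eval_key n m d hmn hdpos hdn g hg (ζ ^ i) hζi
      exact mul_right_cancel₀ hcA (e1.trans e2.symm)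
    rw [Polynomial.cyclotomic_eq_minpoly_rat hζ hdpos]
    apply minpoly.dvd
    rw [map_sub, Polynomial.aeval_comp, map_pow, Polynomial.aeval_X, bridge, bridge, heq, sub_self]

lemma residue_sum_eq (n m l i : ℕ) (hmn : m ≤ n) (hl : 0 < l) (hln : l ∣ n)
    (hi : Nat.Coprime i l) (g : Polynomial ℕ)
    (hg : g.map (Nat.castRingHom ℤ) * ∏ j ∈ Finset.range m, ((1 : Polynomial ℤ) - X ^ (j + 1))
        = ∏ j ∈ Finset.range m, ((1 : Polynomial ℤ) - X ^ (n - j)))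
    (r : ZMod l) :
    ∑ k ∈ Finset.range (g.natDegree + 1), (if ((i * k : ℕ) : ZMod l) = r then g.coeff k else 0)
      = ∑ k ∈ Finset.range (g.natDegree + 1),
          (if ((k : ℕ) : ZMod l) = r then g.coeff k else 0) := by
  classical
  obtain ⟨h, hh⟩ := gauss_dvd n m l i hmn hl hln hi g hg
  set gq := g.map (Nat.castRingHom ℚ) with hgq
  set y : AddMonoidAlgebra ℚ (ZMod l) := AddMonoidAlgebra.single (1 : ZMod l) (1 : ℚ) with hy
  have hyl : y ^ l = 1 := by
    rw [hy, AddMonoidAlgebra.single_pow, one_pow, nsmul_eq_mul, mul_one, ZMod.natCast_self]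
    rfl
  have hkey : Polynomial.aeval y gq = Polynomial.aeval (y ^ i) gq := by
    have h2 := congrArg (Polynomial.aeval y) hh
    rw [map_sub, map_mul, map_sub, map_pow, Polynomial.aeval_X, map_one, hyl, sub_self,
      zero_mul, Polynomial.aeval_comp, map_pow, Polynomial.aeval_X] at h2
    exact sub_eq_zero.mp h2
  have hyi : y ^ i = AddMonoidAlgebra.single ((i : ZMod l)) (1 : ℚ) := by
    rw [hy, AddMonoidAlgebra.single_pow, one_pow, nsmul_eq_mul, mul_one]
  have hdeg : gq.natDegree = g.natDegree :=
    Polynomial.natDegree_map_eq_of_injective (Nat.cast_injective) g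
  have hcoeff : ∀ (a : ZMod l),
      (Polynomial.aeval (AddMonoidAlgebra.single a (1 : ℚ) : AddMonoidAlgebra ℚ (ZMod l)) gq).coeff r
        = ∑ k ∈ Finset.range (g.natDegree + 1),
            (if (k : ZMod l) * a = r then (g.coeff k : ℚ) else 0) := by
    intro a
    rw [Polynomial.aeval_eq_sum_range, hdeg, AddMonoidAlgebra.coeff_sum, Finsupp.finset_sum_apply]
    apply Finset.sum_congr rfl
    intro k _
    rw [AddMonoidAlgebra.single_pow, one_pow, Polynomial.coeff_map, AddMonoidAlgebra.coeff_smul, Finsupp.smul_apply,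
      AddMonoidAlgebra.coeff_single, Finsupp.single_apply, nsmul_eq_mul]
    simp [smul_eq_mul, mul_ite]
  have hfinal := congrArg (fun x : AddMonoidAlgebra ℚ (ZMod l) => x.coeff r) hkey
  rw [hyi, hcoeff, hcoeff] at hfinal
  have h1 : ∀ k : ℕ, (if (k : ZMod l) * (i : ZMod l) = r then (g.coeff k : ℚ) else 0)
      = (if ((i * k : ℕ) : ZMod l) = r then (g.coeff k : ℚ) else 0) := by
    intro k; rw [Nat.cast_mul, mul_comm]
  have h2 : ∀ k : ℕ, (if (k : ZMod l) * 1 = r then (g.coeff k : ℚ) else 0)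
      = (if ((k : ℕ) : ZMod l) = r then (g.coeff k : ℚ) else 0) := by
    intro k; rw [mul_one]
  rw [Finset.sum_congr rfl fun k _ => h2 k, Finset.sum_congr rfl fun k _ => h1 k] at hfinal
  exact_mod_cast hfinal.symm

def tensorPowAdd (b : C) (a : ℕ) : (c : ℕ) → (tensorPow b (a + c) ≅ tensorPow b a ⊗ tensorPow b c)
  | 0 => (ρ_ (tensorPow b a)).symm
  | c + 1 => whiskerRightIso (tensorPowAdd b a c) b ≪≫ α_ _ _ _

def tensorPowMul (b : C) (i : ℕ) : (k : ℕ) → (tensorPow (tensorPow b i) k ≅ tensorPow b (i * k))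
  | 0 => Iso.refl _
  | k + 1 => whiskerRightIso (tensorPowMul b i k) (tensorPow b i) ≪≫
      (tensorPowAdd b (i * k) i).symm ≪≫ eqToIso (congrArg (tensorPow b) (Nat.mul_succ i k).symm)

def tensorPowUnit {b : C} {l : ℕ} (e : tensorPow b l ≅ 𝟙_ C) :
    (t : ℕ) → (tensorPow b (l * t) ≅ 𝟙_ C)
  | 0 => Iso.refl _
  | t + 1 => eqToIso (congrArg (tensorPow b) (Nat.mul_succ l t)) ≪≫
      tensorPowAdd b (l * t) l ≪≫ whiskerRightIso (tensorPowUnit e t) _ ≪≫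
      whiskerLeftIso (𝟙_ C) e ≪≫ λ_ _

def tensorPowResidue {b : C} {l : ℕ} (e : tensorPow b l ≅ 𝟙_ C) (k : ℕ) :
    tensorPow b k ≅ tensorPow b (k % l) :=
  eqToIso (congrArg (tensorPow b) (Nat.div_add_mod k l).symm) ≪≫
    tensorPowAdd b (l * (k / l)) (k % l) ≪≫
    whiskerRightIso (tensorPowUnit e (k / l)) _ ≪≫ λ_ _

noncomputable def fiberEquiv {A B κ : Type} [Fintype A] [Fintype B] [DecidableEq κ] (F : A → κ) (G : B → κ)
    (h : ∀ r, Fintype.card {a // F a = r} = Fintype.card {b // G b = r}) :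
    {e : A ≃ B // ∀ a, G (e a) = F a} := by
  classical
  refine ⟨(Equiv.sigmaFiberEquiv F).symm.trans
    ((Equiv.sigmaCongrRight fun r => Fintype.equivOfCardEq (h r)).trans
      (Equiv.sigmaFiberEquiv G)), fun a => ?_⟩
  exact ((Fintype.equivOfCardEq (h (F a))) ⟨a, rfl⟩).2

noncomputable def regroupIso {ι κ : Type} [Fintype ι] [Fintype κ] [DecidableEq κ]
    (co : ι → ℕ) (w : ι → κ) (X : κ → C) :
    (⨁ fun k : ι => ⨁ fun _ : Fin (co k) => X (w k)) ≅
      (⨁ fun r : κ => ⨁ fun _ : Fin (∑ k, if w k = r then co k else 0) => X r) := by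
  classical
  refine (biproductBiproductIso (fun k : ι => Fin (co k)) (fun k _ => X (w k))) ≪≫ ?_ ≪≫
    (biproductBiproductIso (fun r : κ => Fin (∑ k, if w k = r then co k else 0))
      (fun r _ => X r)).symm
  have hcard : ∀ r : κ, Fintype.card {x : Σ k : ι, Fin (co k) // w x.1 = r} =
      Fintype.card {y : Σ r' : κ, Fin (∑ k, if w k = r' then co k else 0) // y.1 = r} := by
    intro r
    rw [Fintype.card_subtype, Fintype.card_subtype]
    rw [Finset.card_filter, Finset.card_filter]
    rw [← Finset.univ_sigma_univ, Finset.sum_sigma, ← Finset.univ_sigma_univ, Finset.sum_sigma]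
    simp [Finset.sum_ite_eq, eq_comm]
  obtain ⟨e, he⟩ := fiberEquiv (fun x : Σ k : ι, Fin (co k) => w x.1)
      (fun y : Σ r : κ, Fin (∑ k, if w k = r then co k else 0) => y.1) hcard
  exact biproduct.whiskerEquiv e fun j => eqToIso (congrArg X (he j))

/-- **Categorified cyclic sieving for Gaussian binomials.**
Let `m ≤ n`, let `l` be a positive divisor of `n`, let `i` be coprime to `l`, and let
`g ∈ ℕ[t]` be the Gaussian polynomial `(n choose m)_t`, characterised by
`g * (1-t)⋯(1-t^m) = (1-t^n)⋯(1-t^{n-m+1})` in `ℤ[t]`.  If `b` is an object of an additive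
symmetric monoidal category with `b^{⊗l} ≅ 𝟙`, then `(n choose m)_{b^{⊗i}} ≅ (n choose m)_b`. -/
theorem gaussian_evalPoly_iso
    [SymmetricCategory C] [MonoidalPreadditive C]
    (n m : ℕ) (hmn : m ≤ n)
    (l : ℕ) (hl : 0 < l) (hln : l ∣ n)
    (i : ℕ) (hi : Nat.Coprime i l)
    (g : Polynomial ℕ)
    (hg : g.map (Nat.castRingHom ℤ) * ∏ j ∈ Finset.range m, ((1 : Polynomial ℤ) - X ^ (j + 1))
        = ∏ j ∈ Finset.range m, ((1 : Polynomial ℤ) - X ^ (n - j)))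
    (b : C) (hb : Nonempty (tensorPow b l ≅ 𝟙_ C)) :
    Nonempty (evalPoly g (tensorPow b i) ≅ evalPoly g b) := by
  obtain ⟨e⟩ := hb
  haveI : NeZero l := ⟨hl.ne'⟩
  classical
  set D := g.natDegree with hD
  let X : ZMod l → C := fun r => tensorPow b r.val
  have isoRes : ∀ k : ℕ, tensorPow b k ≅ X ((k : ZMod l)) := fun k =>
    tensorPowResidue e k ≪≫ eqToIso (congrArg (tensorPow b) (ZMod.val_natCast l k).symm)
  let co : Fin (D + 1) → ℕ := fun k => g.coeff k.1
  let w₁ : Fin (D + 1) → ZMod l := fun k => ((i * k.1 : ℕ) : ZMod l)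
  let w₂ : Fin (D + 1) → ZMod l := fun k => ((k.1 : ℕ) : ZMod l)
  let i1 : evalPoly g (tensorPow b i) ≅ ⨁ fun k : Fin (D + 1) => ⨁ fun _ : Fin (co k) => X (w₁ k) :=
    biproduct.mapIso fun k => biproduct.mapIso fun _ => tensorPowMul b i k.1 ≪≫ isoRes (i * k.1)
  let i2 : evalPoly g b ≅ ⨁ fun k : Fin (D + 1) => ⨁ fun _ : Fin (co k) => X (w₂ k) :=
    biproduct.mapIso fun k => biproduct.mapIso fun _ => isoRes k.1
  have hN : ∀ r : ZMod l, (∑ k, if w₁ k = r then co k else 0) = ∑ k, if w₂ k = r then co k else 0 := by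
    intro r
    rw [Fin.sum_univ_eq_sum_range (fun k => if ((i * k : ℕ) : ZMod l) = r then g.coeff k else 0),
      Fin.sum_univ_eq_sum_range (fun k => if ((k : ℕ) : ZMod l) = r then g.coeff k else 0)]
    exact residue_sum_eq n m l i hmn hl hln hi g hg r
  have hfun : (fun r : ZMod l => ⨁ fun _ : Fin (∑ k, if w₁ k = r then co k else 0) => X r)
      = fun r : ZMod l => ⨁ fun _ : Fin (∑ k, if w₂ k = r then co k else 0) => X r := by
    funext r; rw [hN r]
  exact ⟨i1 ≪≫ regroupIso co w₁ X ≪≫ eqToIso (congrArg (fun F => ⨁ F) hfun) ≪≫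
    (regroupIso co w₂ X).symm ≪≫ i2.symm⟩
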